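/- Let p be a prime, let 1 ≤ m ≤ k, and let λ be a multi-index of length k with all entries positive. If the monomial x^ν = x_0^{ν_0}x_1^{ν_1}⋯x_k^{ν_k} occurs with nonzero coefficient in δ_m(τλ) ∈ Z_p[x_0,x_1,…,x_k], then α_p(ν) = α_p(λ). -/

import Mathlib

open MvPolynomial

/-- The `m`-coboundary map `δ_m` on polynomials in `k` variables `x_1, …, x_k`
(indexed by `Fin k`, with `j : Fin k` standing for the variable `x_{j+1}`),
landing in polynomials in the variables `x_0, …, x_k` (indexed by `Fin (k+1)`). -/
noncomputable def delta (A : Type*) [CommRing A] (m k : ℕ)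
    (f : MvPolynomial (Fin k) A) : MvPolynomial (Fin (k + 1)) A :=
  aeval (fun j : Fin k => (X j.succ : MvPolynomial (Fin (k + 1)) A)) f
    + ∑ i ∈ Finset.Icc 1 m, (-1 : MvPolynomial (Fin (k + 1)) A) ^ i *
        aeval (fun j : Fin k =>
          if (j : ℕ) + 1 < i then (X j.castSucc : MvPolynomial (Fin (k + 1)) A)
          else if (j : ℕ) + 1 = i then X j.castSucc + X j.succ
          else X j.succ) f
    + (-1 : MvPolynomial (Fin (k + 1)) A) ^ (m + 1) *
        aeval (fun j : Fin k =>
          if (j : ℕ) + 1 ≤ m then (X j.castSucc : MvPolynomial (Fin (k + 1)) A)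
          else X j.succ) f

/-- The monomial symmetric polynomial `τ λ` associated to a multi-index
`λ : Fin k → ℕ`: the sum of `x^μ` over the distinct rearrangements `μ` of `λ`. -/
noncomputable def tau (A : Type*) [CommRing A] {k : ℕ} (lam : Fin k → ℕ) :
    MvPolynomial (Fin k) A :=
  ∑ d ∈ (Finset.univ : Finset (Equiv.Perm (Fin k))).image
      (fun σ => Finsupp.equivFunOnFinite.symm (fun i => lam (σ i))),
    monomial d (1 : A)

/-- The multiset of values of a multi-index `Fin k → ℕ`. -/
def multisetOf {k : ℕ} (lam : Fin k → ℕ) : Multiset ℕ :=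
  Multiset.map lam Finset.univ.val

/-- The exponent multiset of an exponent vector `d : Fin k →₀ ℕ`. -/
def exMult {k : ℕ} (d : Fin k →₀ ℕ) : Multiset ℕ :=
  multisetOf (⇑d)

/-- `σ_p(n)`, the sum of the digits of `n` in base `p`. -/
def sigmaDigits (p n : ℕ) : ℕ := (Nat.digits p n).sum

/-- `α_p(λ)`, the number of carries when summing the entries of `λ` in base `p`;
equivalently the `p`-adic valuation of the multinomial coefficient of `λ`. -/
def alphaCarry (p : ℕ) (s : Multiset ℕ) : ℕ :=
  padicValNat p (Nat.factorial s.sum / (s.map Nat.factorial).prod)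

/-- The splitting distance `φ_p(λ) = (Σ_i σ_p(λ_i)) − |λ|`. -/
def phiSplit (p : ℕ) (s : Multiset ℕ) : ℕ :=
  (s.map (sigmaDigits p)).sum - Multiset.card s

/-- A multiset is power-of-`p` when all its entries are powers of `p`. -/
def IsPowOf (p : ℕ) (s : Multiset ℕ) : Prop := ∀ x ∈ s, ∃ a : ℕ, x = p ^ a

/-- `λ` is `p`-carry-minimal: `α_p(λ) ≤ α_p(μ)` for every multiset `μ` of positive
integers with the same sum and the same number of entries as `λ`. -/
def IsCarryMin (p : ℕ) (s : Multiset ℕ) : Prop :=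
  ∀ t : Multiset ℕ, (∀ x ∈ t, 0 < x) → t.sum = s.sum →
    Multiset.card t = Multiset.card s → alphaCarry p s ≤ alphaCarry p t

/-- A single gathering operation: replace two entries `a`, `b` by `a + b`. -/
def Gathers (s t : Multiset ℕ) : Prop :=
  ∃ a b u, s = a ::ₘ b ::ₘ u ∧ t = (a + b) ::ₘ u

/-- `gatherSet m λ = T^m(λ)`, the set of multisets obtained from `λ` by `m`
successive gathering operations. -/
def gatherSet : ℕ → Multiset ℕ → Set (Multiset ℕ)
  | 0, s => {s}
  | m + 1, s => {t | ∃ u ∈ gatherSet m s, Gathers u t}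

/-- One step of the annihilating-set construction: split an entry `x = a + b`
(with `a, b > 0` and no base-`p` carries in `a + b`), and add `b` onto another
entry `y`. -/
def AnnStep (p : ℕ) (μ ν : Multiset ℕ) : Prop :=
  ∃ (x y a b : ℕ) (u : Multiset ℕ), μ = x ::ₘ y ::ₘ u ∧ 0 < a ∧ 0 < b ∧ a + b = x ∧
    sigmaDigits p a + sigmaDigits p b = sigmaDigits p x ∧ ν = a ::ₘ (b + y) ::ₘ u

/-- `ann_p(λ)`: the smallest set of multisets containing `λ` closed under `AnnStep`. -/
def annSet (p : ℕ) (lam : Multiset ℕ) : Set (Multiset ℕ) :=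
  {μ | Relation.ReflTransGen (AnnStep p) lam μ}

/-- The `m`-coboundary map as a linear map. -/
noncomputable def deltaLM (A : Type*) [CommRing A] (m k : ℕ) :
    MvPolynomial (Fin k) A →ₗ[A] MvPolynomial (Fin (k + 1)) A :=
  (aeval (fun j : Fin k => (X j.succ : MvPolynomial (Fin (k + 1)) A))).toLinearMap
    + ∑ i ∈ Finset.Icc 1 m, ((-1 : A) ^ i) •
        (aeval (fun j : Fin k =>
          if (j : ℕ) + 1 < i then (X j.castSucc : MvPolynomial (Fin (k + 1)) A)
          else if (j : ℕ) + 1 = i then X j.castSucc + X j.succ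
          else X j.succ)).toLinearMap
    + ((-1 : A) ^ (m + 1)) •
        (aeval (fun j : Fin k =>
          if (j : ℕ) + 1 ≤ m then (X j.castSucc : MvPolynomial (Fin (k + 1)) A)
          else X j.succ)).toLinearMap
/-- generic injection `Fin k → Fin (k+1)` skipping position `c`. -/
def emb (k c : ℕ) : Fin k → Fin (k + 1) := fun j =>
  if (j : ℕ) < c then j.castSucc else j.succ

lemma emb_val (k c : ℕ) (j : Fin k) :
    ((emb k c j : Fin (k + 1)) : ℕ) = if (j : ℕ) < c then (j : ℕ) else (j : ℕ) + 1 := by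
  unfold emb; split_ifs <;> simp

lemma emb_inj (k c : ℕ) : Function.Injective (emb k c) := by
  intro x y h
  have hv := congrArg Fin.val h
  rw [emb_val, emb_val] at hv
  apply Fin.ext
  split_ifs at hv <;> omega

lemma emb_ne (k c : ℕ) (j : Fin k) (x : Fin (k + 1)) (hx : (x : ℕ) = c) :
    emb k c j ≠ x := by
  intro h
  have hv := congrArg Fin.val h
  rw [emb_val, hx] at hv
  split_ifs at hv <;> omega

lemma univ_val_eq_cons {k : ℕ} (e : Fin k → Fin (k + 1)) (he : Function.Injective e)
    (c : Fin (k + 1)) (hc : ∀ j, e j ≠ c) :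
    (Finset.univ.val : Multiset (Fin (k + 1))) = c ::ₘ Finset.univ.val.map e := by
  symm
  apply Multiset.eq_of_le_of_card_le
  · rw [Multiset.le_iff_subset]
    · intro x _; exact Finset.mem_univ x
    · refine Multiset.nodup_cons.mpr ⟨?_, Multiset.Nodup.map he Finset.univ.nodup⟩
      intro hmem
      obtain ⟨j, -, hj⟩ := Multiset.mem_map.mp hmem
      exact hc j hj
  · simp

lemma exMult_mapDomain {k : ℕ} (e : Fin k → Fin (k + 1)) (he : Function.Injective e)
    (c : Fin (k + 1)) (hc : ∀ j, e j ≠ c) (d : Fin k →₀ ℕ) :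
    exMult (Finsupp.mapDomain e d) = 0 ::ₘ exMult d := by
  unfold exMult multisetOf
  rw [univ_val_eq_cons e he c hc, Multiset.map_cons, Multiset.map_map]
  have h0 : Finsupp.mapDomain e d c = 0 :=
    Finsupp.mapDomain_notin_range d c (by rintro ⟨j, hj⟩; exact hc j hj)
  rw [h0]
  congr 1
  apply Multiset.map_congr rfl
  intro j _
  exact Finsupp.mapDomain_apply he d j

lemma exMult_perm {k : ℕ} (lam : Fin k → ℕ) (σ : Equiv.Perm (Fin k)) :
    exMult (Finsupp.equivFunOnFinite.symm (fun i => lam (σ i))) = multisetOf lam := by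
  unfold exMult multisetOf
  have h1 : ⇑(Finsupp.equivFunOnFinite.symm (fun i => lam (σ i))) = fun i => lam (σ i) := rfl
  rw [h1]
  have h2 : Multiset.map (fun i => lam (σ i)) Finset.univ.val
      = Multiset.map lam (Multiset.map (⇑σ) Finset.univ.val) := by
    rw [Multiset.map_map]; rfl
  rw [h2]
  congr 1
  calc Multiset.map (⇑σ) Finset.univ.val = (Finset.univ.map σ.toEmbedding).val := rfl
    _ = Finset.univ.val := by rw [Finset.map_univ_equiv]

lemma aeval_monomial_one {A : Type*} [CommRing A] {k : ℕ}
    (φ : Fin k → MvPolynomial (Fin (k + 1)) A) (d : Fin k →₀ ℕ) :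
    aeval φ (monomial d (1 : A)) = ∏ j, φ j ^ d j := by
  rw [aeval_monomial, map_one, one_mul]
  exact Finsupp.prod_fintype _ _ (fun i => pow_zero _)

lemma coeff_rename_case {A : Type*} [CommRing A] {k : ℕ} (e : Fin k → Fin (k + 1))
    (d : Fin k →₀ ℕ) (ν : Fin (k + 1) →₀ ℕ)
    (h : coeff ν (aeval (fun j => (X (e j) : MvPolynomial (Fin (k + 1)) A))
      (monomial d (1 : A))) ≠ 0) :
    ν = Finsupp.mapDomain e d := by
  classical
  have h1 : (aeval fun j => (X (e j) : MvPolynomial (Fin (k + 1)) A))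
      = (rename e : MvPolynomial (Fin k) A →ₐ[A] MvPolynomial (Fin (k + 1)) A) := by
    apply MvPolynomial.algHom_ext
    intro j
    simp
  have h2 := DFunLike.congr_fun h1 ((monomial d) (1 : A))
  rw [h2, rename_monomial, coeff_monomial] at h
  split_ifs at h with hh
  · exact hh.symm
  · exact absurd rfl h

lemma prodFact_dvd (s : Multiset ℕ) :
    (s.map Nat.factorial).prod ∣ s.sum.factorial := by
  induction s using Multiset.induction with
  | empty => simp
  | cons a u ih =>
    simp only [Multiset.map_cons, Multiset.prod_cons, Multiset.sum_cons]
    calc a.factorial * (u.map Nat.factorial).prod ∣ a.factorial * u.sum.factorial :=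
          mul_dvd_mul_left _ ih
      _ ∣ (a + u.sum).factorial := Nat.factorial_mul_factorial_dvd_factorial_add a u.sum

lemma prodFact_ne (s : Multiset ℕ) : (s.map Nat.factorial).prod ≠ 0 := by
  have : 0 < (s.map Nat.factorial).prod := Multiset.prod_pos ?_
  · omega
  intro x hx
  obtain ⟨y, -, rfl⟩ := Multiset.mem_map.mp hx
  exact Nat.factorial_pos y

lemma padic_le_of_dvd {p d n : ℕ} [Fact p.Prime] (h : d ∣ n) (hn : n ≠ 0) :
    padicValNat p d ≤ padicValNat p n := by
  obtain ⟨m, rfl⟩ := h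
  rcases mul_ne_zero_iff.mp hn with ⟨hd, hm⟩
  rw [padicValNat.mul hd hm]; omega

lemma alphaCarry_cons_zero (p : ℕ) (s : Multiset ℕ) :
    alphaCarry p (0 ::ₘ s) = alphaCarry p s := by
  simp [alphaCarry]

lemma alphaCarry_split {p : ℕ} [Fact p.Prime] (a b : ℕ) (u : Multiset ℕ)
    (h : ¬ p ∣ (a + b).choose a) :
    alphaCarry p (a ::ₘ b ::ₘ u) = alphaCarry p ((a + b) ::ₘ u) := by
  set P := (u.map Nat.factorial).prod with hP
  have hPne : P ≠ 0 := prodFact_ne u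
  have hane : a.factorial ≠ 0 := (Nat.factorial_pos a).ne'
  have hbne : b.factorial ≠ 0 := (Nat.factorial_pos b).ne'
  have habne : (a + b).factorial ≠ 0 := (Nat.factorial_pos _).ne'
  have hSne : (a + b + u.sum).factorial ≠ 0 := (Nat.factorial_pos _).ne'
  have hd1 : a.factorial * (b.factorial * P) ∣ (a + b + u.sum).factorial := by
    calc a.factorial * (b.factorial * P) = a.factorial * b.factorial * P := (mul_assoc _ _ _).symm
      _ ∣ (a + b).factorial * u.sum.factorial :=
        mul_dvd_mul (Nat.factorial_mul_factorial_dvd_factorial_add a b) (prodFact_dvd u)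
      _ ∣ (a + b + u.sum).factorial := Nat.factorial_mul_factorial_dvd_factorial_add _ _
  have hd2 : (a + b).factorial * P ∣ (a + b + u.sum).factorial := by
    calc (a + b).factorial * P ∣ (a + b).factorial * u.sum.factorial :=
          mul_dvd_mul_left _ (prodFact_dvd u)
      _ ∣ (a + b + u.sum).factorial := Nat.factorial_mul_factorial_dvd_factorial_add _ _
  have hch : (a + b).choose a * a.factorial * b.factorial = (a + b).factorial := by
    have := Nat.choose_mul_factorial_mul_factorial (Nat.le_add_right a b)
    simpa using this
  have hvch : padicValNat p ((a + b).choose a) = 0 :=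
    padicValNat.eq_zero_of_not_dvd h
  have hvfab : padicValNat p (a + b).factorial
      = padicValNat p a.factorial + padicValNat p b.factorial := by
    rw [← hch, padicValNat.mul (mul_ne_zero (Nat.choose_pos (Nat.le_add_right a b)).ne' hane) hbne,
      padicValNat.mul (Nat.choose_pos (Nat.le_add_right a b)).ne' hane, hvch]
    omega
  have hle1 := padic_le_of_dvd (p := p) hd1 hSne
  have hle2 := padic_le_of_dvd (p := p) hd2 hSne
  have e1 : alphaCarry p (a ::ₘ b ::ₘ u)
      = padicValNat p (a + b + u.sum).factorial
        - (padicValNat p a.factorial + (padicValNat p b.factorial + padicValNat p P)) := by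
    simp only [alphaCarry, Multiset.sum_cons, Multiset.map_cons, Multiset.prod_cons, ← add_assoc]
    rw [padicValNat.div_of_dvd hd1,
      padicValNat.mul hane (mul_ne_zero hbne hPne), padicValNat.mul hbne hPne]
    omega
  have e2 : alphaCarry p ((a + b) ::ₘ u)
      = padicValNat p (a + b + u.sum).factorial
        - (padicValNat p (a + b).factorial + padicValNat p P) := by
    simp only [alphaCarry, Multiset.sum_cons, Multiset.map_cons, Multiset.prod_cons]
    rw [padicValNat.div_of_dvd hd2, padicValNat.mul habne hPne]
  rw [e1, e2, hvfab]
  rw [padicValNat.mul hane (mul_ne_zero hbne hPne), padicValNat.mul hbne hPne] at hle1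
  rw [padicValNat.mul habne hPne, hvfab] at hle2
  omega

lemma caseB_alpha {p : ℕ} [hp : Fact p.Prime] {k : ℕ} (i : ℕ) (hi1 : 1 ≤ i) (hik : i ≤ k)
    (d : Fin k →₀ ℕ) (ν : Fin (k + 1) →₀ ℕ)
    (h : coeff ν (aeval (fun j : Fin k =>
        if (j : ℕ) + 1 < i then (X j.castSucc : MvPolynomial (Fin (k + 1)) (ZMod p))
        else if (j : ℕ) + 1 = i then X j.castSucc + X j.succ
        else X j.succ) (monomial d (1 : ZMod p))) ≠ 0) :
    alphaCarry p (exMult ν) = alphaCarry p (exMult d) := by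
  classical
  set φ : Fin k → MvPolynomial (Fin (k + 1)) (ZMod p) := fun j =>
    if (j : ℕ) + 1 < i then (X j.castSucc : MvPolynomial (Fin (k + 1)) (ZMod p))
    else if (j : ℕ) + 1 = i then X j.castSucc + X j.succ
    else X j.succ with hφ
  have hik1 : i - 1 < k := by omega
  set i' : Fin k := ⟨i - 1, hik1⟩ with hi'
  set a : Fin (k + 1) := i'.castSucc with ha
  set b : Fin (k + 1) := i'.succ with hb
  have hiv : (i' : ℕ) = i - 1 := rfl
  have hav : (a : ℕ) = i - 1 := rfl
  have hbv : (b : ℕ) = i := by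
    rw [hb, Fin.val_succ, hiv]; omega
  set n := d i' with hn
  set e := emb k i with he
  set d' := Finsupp.erase i' d with hd'
  set w := Finsupp.mapDomain e d' with hw
  have heinj : Function.Injective e := emb_inj k i
  have hea : e i' = a := by
    apply Fin.ext
    rw [he, emb_val, hav, if_pos (by rw [hiv]; omega), hiv]
  have heb : ∀ j, e j ≠ b := fun j => emb_ne k i j b hbv
  -- rewrite the polynomial
  have key : aeval φ (monomial d (1 : ZMod p))
      = ∑ t ∈ Finset.range (n + 1),
          monomial (Finsupp.single a t + Finsupp.single b (n - t) + w)
            ((n.choose t : ZMod p)) := by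
    rw [aeval_monomial_one]
    rw [← Finset.mul_prod_erase Finset.univ (fun j => φ j ^ d j) (Finset.mem_univ i')]
    have h1 : φ i' = X a + X b := by
      show (if (i' : ℕ) + 1 < i then (X i'.castSucc : MvPolynomial (Fin (k + 1)) (ZMod p))
        else if (i' : ℕ) + 1 = i then X i'.castSucc + X i'.succ else X i'.succ) = X a + X b
      rw [if_neg (by rw [hiv]; omega), if_pos (by rw [hiv]; omega)]
    have h2 : ∏ j ∈ Finset.univ.erase i', φ j ^ d j = monomial w (1 : ZMod p) := by
      have step : ∀ j ∈ Finset.univ.erase i',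
          φ j ^ d j = (X (e j) : MvPolynomial (Fin (k + 1)) (ZMod p)) ^ d' j := by
        intro j hj
        obtain ⟨hne, -⟩ := Finset.mem_erase.mp hj
        have hjv : (j : ℕ) ≠ i - 1 := by
          intro hh; exact hne (Fin.ext (by simp [hi', hh]))
        rw [Finsupp.erase_ne hne]
        congr 1
        rw [hφ, he]
        simp only [emb]
        have hjk := j.isLt
        split_ifs <;> first | rfl | omega
      rw [Finset.prod_congr rfl step]
      have step2 : ∏ j ∈ Finset.univ.erase i',
            (X (e j) : MvPolynomial (Fin (k + 1)) (ZMod p)) ^ d' j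
          = ∏ j, (X (e j) : MvPolynomial (Fin (k + 1)) (ZMod p)) ^ d' j := by
        rw [← Finset.mul_prod_erase Finset.univ
          (fun j => (X (e j) : MvPolynomial (Fin (k + 1)) (ZMod p)) ^ d' j)
          (Finset.mem_univ i')]
        rw [Finsupp.erase_same, pow_zero, one_mul]
      rw [step2, ← aeval_monomial_one]
      have h3 : (aeval fun j => (X (e j) : MvPolynomial (Fin (k + 1)) (ZMod p)))
          = (rename e : MvPolynomial (Fin k) (ZMod p) →ₐ[ZMod p]
              MvPolynomial (Fin (k + 1)) (ZMod p)) := by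
        apply MvPolynomial.algHom_ext; intro j; simp
      rw [h3, rename_monomial]
    rw [h1, h2, add_pow, Finset.sum_mul]
    apply Finset.sum_congr rfl
    intro t ht
    have hc : ((n.choose t : ℕ) : MvPolynomial (Fin (k + 1)) (ZMod p))
        = C ((n.choose t : ZMod p)) := by
      rw [← map_natCast (C : ZMod p →+* MvPolynomial (Fin (k + 1)) (ZMod p))]
    rw [hc]
    simp only [X_pow_eq_monomial, C_apply, monomial_mul, one_mul, mul_one, add_zero]
    rfl
  rw [key, MvPolynomial.coeff_sum] at h
  obtain ⟨t, ht, hne⟩ := Finset.exists_ne_zero_of_sum_ne_zero h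
  rw [coeff_monomial] at hne
  by_cases heq : Finsupp.single a t + Finsupp.single b (n - t) + w = ν
  swap
  · rw [if_neg heq] at hne; exact absurd rfl hne
  rw [if_pos heq] at hne
  have htn : t ≤ n := Nat.lt_succ_iff.mp (Finset.mem_range.mp ht)
  have hchoose : ¬ p ∣ n.choose t := by
    intro hdvd
    exact hne ((ZMod.natCast_eq_zero_iff _ _).mpr hdvd)
  have hab : a ≠ b := by
    intro hh
    have := congrArg Fin.val hh
    rw [hav, hbv] at this; omega
  -- values of ν
  have hwa : w a = 0 := by
    rw [hw, ← hea, Finsupp.mapDomain_apply heinj, hd', Finsupp.erase_same]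
  have hwb : w b = 0 := by
    rw [hw]
    exact Finsupp.mapDomain_notin_range _ _ (by rintro ⟨j, hj⟩; exact heb j hj)
  have hνb : ν b = n - t := by
    rw [← heq, Finsupp.add_apply, Finsupp.add_apply, hwb,
      Finsupp.single_eq_of_ne' hab, Finsupp.single_eq_same]
    omega
  have hνei' : ν (e i') = t := by
    rw [hea, ← heq, Finsupp.add_apply, Finsupp.add_apply, hwa,
      Finsupp.single_eq_same, Finsupp.single_eq_of_ne' (Ne.symm hab)]
    omega
  have hνe : ∀ j : Fin k, j ≠ i' → ν (e j) = d j := by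
    intro j hj
    have h1 : a ≠ e j := by
      rw [← hea]
      intro hh
      exact hj (heinj hh.symm)
    rw [← heq, Finsupp.add_apply, Finsupp.add_apply,
      Finsupp.single_eq_of_ne' h1, Finsupp.single_eq_of_ne' (Ne.symm (heb j))]
    rw [hw, Finsupp.mapDomain_apply heinj, hd', Finsupp.erase_ne hj]
    omega
  -- multiset computation
  have hmem : i' ∈ (Finset.univ.val : Multiset (Fin k)) :=
    Finset.mem_val.mpr (Finset.mem_univ i')
  have hcons : (Finset.univ.val : Multiset (Fin k)) = i' ::ₘ Finset.univ.val.erase i' :=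
    (Multiset.cons_erase hmem).symm
  have hmultν : exMult ν
      = (n - t) ::ₘ t ::ₘ Multiset.map (⇑d) (Finset.univ.val.erase i') := by
    unfold exMult multisetOf
    rw [univ_val_eq_cons e heinj b heb, Multiset.map_cons, hνb, Multiset.map_map]
    congr 1
    conv_lhs => rw [hcons]
    rw [Multiset.map_cons]
    have : (⇑ν ∘ e) i' = t := hνei'
    rw [this]
    congr 1
    apply Multiset.map_congr rfl
    intro j hj
    have hjne : j ≠ i' := by
      have hnd : (Finset.univ.val : Multiset (Fin k)).Nodup := Finset.univ.nodup
      exact ((Multiset.Nodup.mem_erase_iff hnd).mp hj).1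
    exact hνe j hjne
  have hmultd : exMult d = n ::ₘ Multiset.map (⇑d) (Finset.univ.val.erase i') := by
    unfold exMult multisetOf
    conv_lhs => rw [hcons]
    rw [Multiset.map_cons, hn]
  rw [hmultν, hmultd, Multiset.cons_swap]
  have hnt : t + (n - t) = n := by omega
  have := alphaCarry_split (p := p) t (n - t) (Multiset.map (⇑d) (Finset.univ.val.erase i'))
    (by rw [hnt]; exact hchoose)
  rw [hnt] at this
  exact this


/-- Every monomial occurring with nonzero coefficient in
`δ_m(τλ)` over `ℤ/pℤ` has the same carry count as `λ`. -/
theorem statement14 (p : ℕ) (hp : p.Prime) (k m : ℕ) (hm : 1 ≤ m) (hmk : m ≤ k)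
    (lam : Fin k → ℕ) (hpos : ∀ i, 0 < lam i)
    (ν : Fin (k + 1) →₀ ℕ)
    (hν : MvPolynomial.coeff ν (delta (ZMod p) m k (tau (ZMod p) lam)) ≠ 0) :
    alphaCarry p (exMult ν) = alphaCarry p (multisetOf lam) := by
  classical
  have hfp : Fact p.Prime := ⟨hp⟩
  rw [delta, coeff_add, coeff_add] at hν
  have tri : ∀ x y z : ZMod p, x + y + z ≠ 0 → x ≠ 0 ∨ y ≠ 0 ∨ z ≠ 0 := by
    intro x y z hxyz
    by_contra hc
    push_neg at hc
    obtain ⟨h1, h2, h3⟩ := hc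
    rw [h1, h2, h3] at hxyz
    simp at hxyz
  rcases tri _ _ _ hν with h | h | h
  · -- case A
    rw [tau, map_sum, coeff_sum] at h
    obtain ⟨d, hdS, hd⟩ := Finset.exists_ne_zero_of_sum_ne_zero h
    have hν' := coeff_rename_case Fin.succ d ν hd
    obtain ⟨σ, -, rfl⟩ := Finset.mem_image.mp hdS
    rw [hν', exMult_mapDomain Fin.succ (Fin.succ_injective k) 0
      (fun j => Fin.succ_ne_zero j), alphaCarry_cons_zero, exMult_perm lam σ]
  · -- case B
    rw [coeff_sum] at h
    obtain ⟨i, hiIcc, hi⟩ := Finset.exists_ne_zero_of_sum_ne_zero h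
    obtain ⟨hi1, him⟩ := Finset.mem_Icc.mp hiIcc
    have hsign : ((-1 : MvPolynomial (Fin (k + 1)) (ZMod p))) ^ i
        = C ((-1 : ZMod p) ^ i) := by rw [map_pow, map_neg, map_one]
    rw [hsign, coeff_C_mul] at hi
    have h' : coeff ν (aeval (fun j : Fin k =>
        if (j : ℕ) + 1 < i then (X j.castSucc : MvPolynomial (Fin (k + 1)) (ZMod p))
        else if (j : ℕ) + 1 = i then X j.castSucc + X j.succ
        else X j.succ) (tau (ZMod p) lam)) ≠ 0 := by
      intro hz
      rw [hz, mul_zero] at hi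
      exact hi rfl
    rw [tau, map_sum, coeff_sum] at h'
    obtain ⟨d, hdS, hd⟩ := Finset.exists_ne_zero_of_sum_ne_zero h'
    obtain ⟨σ, -, rfl⟩ := Finset.mem_image.mp hdS
    rw [caseB_alpha i hi1 (le_trans him hmk) _ ν hd, exMult_perm lam σ]
  · -- case C
    have hsign : ((-1 : MvPolynomial (Fin (k + 1)) (ZMod p))) ^ (m + 1)
        = C ((-1 : ZMod p) ^ (m + 1)) := by rw [map_pow, map_neg, map_one]
    rw [hsign, coeff_C_mul] at h
    have h' : coeff ν (aeval (fun j : Fin k =>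
        if (j : ℕ) + 1 ≤ m then (X j.castSucc : MvPolynomial (Fin (k + 1)) (ZMod p))
        else X j.succ) (tau (ZMod p) lam)) ≠ 0 := by
      intro hz
      rw [hz, mul_zero] at h
      exact h rfl
    have hfun : (fun j : Fin k =>
        if (j : ℕ) + 1 ≤ m then (X j.castSucc : MvPolynomial (Fin (k + 1)) (ZMod p))
        else X j.succ) = fun j : Fin k => X (emb k m j) := by
      funext j
      simp only [emb]
      by_cases hj : (j : ℕ) < m
      · rw [if_pos (by omega), if_pos hj]
      · rw [if_neg (by omega), if_neg hj]
    rw [hfun, tau, map_sum, coeff_sum] at h'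
    obtain ⟨d, hdS, hd⟩ := Finset.exists_ne_zero_of_sum_ne_zero h'
    have hν' := coeff_rename_case (emb k m) d ν hd
    obtain ⟨σ, -, rfl⟩ := Finset.mem_image.mp hdS
    rw [hν', exMult_mapDomain (emb k m) (emb_inj k m) ⟨m, by omega⟩
      (fun j => emb_ne k m j _ rfl), alphaCarry_cons_zero, exMult_perm lam σ]
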